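/- Let Γ ⊆ Σ be finite and nonempty, let a₁, …, aₙ ∈ Γ (n ≥ 0), and let u₁, …, uₘ (m ≥ 1) be generalized words each of one of the forms Γ^{η}, c Γ^{η}, Γ^{η} c, or c Γ^{η} d with c, d ∈ Γ, such that every element of Γ occurs in some a_i or u_j. Then the shuffle [a₁, …, aₙ, u₁, …, uₘ]^{η} is isomorphic to Γ^{η}. -/

import Mathlib

namespace ShuffleAux

variable {S : Type*}

/-- A "good" `Γ`-coloring: nonempty order, all colors in `Γ`, no endpoints,
and each color of `Γ` dense. -/
def Good {α : Type*} [LinearOrder α] (Γ : Finset S) (c : α → S) : Prop :=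
  Nonempty α ∧ (∀ x, c x ∈ Γ) ∧ (∀ x : α, ∃ y, x < y) ∧ (∀ x : α, ∃ y, y < x) ∧
  (∀ x y : α, x < y → ∀ a ∈ Γ, ∃ z, x < z ∧ z < y ∧ c z = a)

variable {α β : Type*} [LinearOrder α] [LinearOrder β] {Γ : Finset S}

theorem Good.exists_gt_color {c : α → S} (h : Good Γ c) (x : α) {a : S} (ha : a ∈ Γ) :
    ∃ m, x < m ∧ c m = a := by
  obtain ⟨y, hy⟩ := h.2.2.1 x
  obtain ⟨z, hz1, _, hz3⟩ := h.2.2.2.2 x y hy a ha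
  exact ⟨z, hz1, hz3⟩

theorem Good.exists_lt_color {c : α → S} (h : Good Γ c) (x : α) {a : S} (ha : a ∈ Γ) :
    ∃ m, m < x ∧ c m = a := by
  obtain ⟨y, hy⟩ := h.2.2.2.1 x
  obtain ⟨z, _, hz2, hz3⟩ := h.2.2.2.2 y x hy a ha
  exact ⟨z, hz2, hz3⟩

theorem Good.exists_color {c : α → S} (h : Good Γ c) {a : S} (ha : a ∈ Γ) :
    ∃ m, c m = a := by
  obtain ⟨x⟩ := h.1
  obtain ⟨m, _, hm⟩ := h.exists_gt_color x ha
  exact ⟨m, hm⟩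

theorem Good.between_finsets {c : α → S} (h : Good Γ c) (lo hi : Finset α)
    (lo_lt_hi : ∀ x ∈ lo, ∀ y ∈ hi, x < y) {a : S} (ha : a ∈ Γ) :
    ∃ m : α, (∀ x ∈ lo, x < m) ∧ (∀ y ∈ hi, m < y) ∧ c m = a := by
  by_cases nlo : lo.Nonempty
  · by_cases nhi : hi.Nonempty
    · obtain ⟨m, hm1, hm2, hm3⟩ :=
        h.2.2.2.2 _ _ (lo_lt_hi _ (Finset.max'_mem _ nlo) _ (Finset.min'_mem _ nhi)) a ha
      exact ⟨m, fun x hx => lt_of_le_of_lt (Finset.le_max' lo x hx) hm1,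
        fun y hy => lt_of_lt_of_le hm2 (Finset.min'_le hi y hy), hm3⟩
    · obtain ⟨m, hm1, hm3⟩ := h.exists_gt_color (Finset.max' lo nlo) ha
      exact ⟨m, fun x hx => lt_of_le_of_lt (Finset.le_max' lo x hx) hm1,
        fun y hy => (nhi ⟨y, hy⟩).elim, hm3⟩
  · by_cases nhi : hi.Nonempty
    · obtain ⟨m, hm2, hm3⟩ := h.exists_lt_color (Finset.min' hi nhi) ha
      exact ⟨m, fun x hx => (nlo ⟨x, hx⟩).elim,
        fun y hy => lt_of_lt_of_le hm2 (Finset.min'_le hi y hy), hm3⟩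
    · obtain ⟨m, hm3⟩ := h.exists_color ha
      exact ⟨m, fun x hx => (nlo ⟨x, hx⟩).elim, fun y hy => (nhi ⟨y, hy⟩).elim, hm3⟩

/-- Color-preserving partial isomorphisms. -/
def CPI (c1 : α → S) (c2 : β → S) : Type _ :=
  { f : Finset (α × β) //
    (∀ p ∈ f, ∀ q ∈ f, cmp (Prod.fst p) (Prod.fst q) = cmp (Prod.snd p) (Prod.snd q)) ∧
    ∀ p ∈ f, c2 (Prod.snd p) = c1 (Prod.fst p) }

instance {c1 : α → S} {c2 : β → S} : Inhabited (CPI c1 c2) :=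
  ⟨⟨∅, fun _ h => (Finset.notMem_empty _ h).elim, fun _ h => (Finset.notMem_empty _ h).elim⟩⟩

instance {c1 : α → S} {c2 : β → S} : Preorder (CPI c1 c2) :=
  Subtype.preorder _

theorem exists_across {c1 : α → S} {c2 : β → S} (h1 : ∀ x, c1 x ∈ Γ) (h2 : Good Γ c2)
    (f : CPI c1 c2) (a : α) :
    ∃ b : β, c2 b = c1 a ∧ ∀ p ∈ f.val, cmp (Prod.fst p) a = cmp (Prod.snd p) b := by
  by_cases h : ∃ b, (a, b) ∈ f.val
  · obtain ⟨b, hb⟩ := h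
    exact ⟨b, f.prop.2 _ hb, fun p hp => f.prop.1 _ hp _ hb⟩
  have key :
      ∀ x ∈ (f.val.filter fun p : α × β => p.fst < a).image Prod.snd,
        ∀ y ∈ (f.val.filter fun p : α × β => a < p.fst).image Prod.snd, x < y := by
    intro x hx y hy
    rw [Finset.mem_image] at hx hy
    rcases hx with ⟨p, hp1, rfl⟩
    rcases hy with ⟨q, hq1, rfl⟩
    rw [Finset.mem_filter] at hp1 hq1
    rw [← lt_iff_lt_of_cmp_eq_cmp (f.prop.1 _ hp1.1 _ hq1.1)]
    exact lt_trans hp1.right hq1.right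
  obtain ⟨b, hb, hb', hbc⟩ := h2.between_finsets _ _ key (h1 a)
  refine ⟨b, hbc, ?_⟩
  rintro ⟨p1, p2⟩ hp
  have hne : p1 ≠ a := fun he => h ⟨p2, he ▸ hp⟩
  rcases lt_or_gt_of_ne hne with hl | hr
  · have : p1 < a ∧ p2 < b :=
      ⟨hl, hb _ (Finset.mem_image.mpr ⟨(p1, p2), Finset.mem_filter.mpr ⟨hp, hl⟩, rfl⟩)⟩
    rw [← cmp_eq_lt_iff, ← cmp_eq_lt_iff] at this
    exact this.1.trans this.2.symm
  · have : a < p1 ∧ b < p2 :=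
      ⟨hr, hb' _ (Finset.mem_image.mpr ⟨(p1, p2), Finset.mem_filter.mpr ⟨hp, hr⟩, rfl⟩)⟩
    rw [← cmp_eq_gt_iff, ← cmp_eq_gt_iff] at this
    exact this.1.trans this.2.symm

theorem exists_across_right {c1 : α → S} {c2 : β → S} (h2 : ∀ x, c2 x ∈ Γ) (h1 : Good Γ c1)
    (f : CPI c1 c2) (b : β) :
    ∃ a : α, c1 a = c2 b ∧ ∀ p ∈ f.val, cmp (Prod.snd p) b = cmp (Prod.fst p) a := by
  by_cases h : ∃ a, (a, b) ∈ f.val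
  · obtain ⟨a, ha⟩ := h
    exact ⟨a, (f.prop.2 _ ha).symm, fun p hp => (f.prop.1 _ hp _ ha).symm⟩
  have key :
      ∀ x ∈ (f.val.filter fun p : α × β => p.snd < b).image Prod.fst,
        ∀ y ∈ (f.val.filter fun p : α × β => b < p.snd).image Prod.fst, x < y := by
    intro x hx y hy
    rw [Finset.mem_image] at hx hy
    rcases hx with ⟨p, hp1, rfl⟩
    rcases hy with ⟨q, hq1, rfl⟩
    rw [Finset.mem_filter] at hp1 hq1
    rw [lt_iff_lt_of_cmp_eq_cmp (f.prop.1 _ hp1.1 _ hq1.1)]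
    exact lt_trans hp1.right hq1.right
  obtain ⟨a, ha, ha', hac⟩ := h1.between_finsets _ _ key (h2 b)
  refine ⟨a, hac, ?_⟩
  rintro ⟨p1, p2⟩ hp
  have hne : p2 ≠ b := fun he => h ⟨p1, he ▸ hp⟩
  rcases lt_or_gt_of_ne hne with hl | hr
  · have : p2 < b ∧ p1 < a :=
      ⟨hl, ha _ (Finset.mem_image.mpr ⟨(p1, p2), Finset.mem_filter.mpr ⟨hp, hl⟩, rfl⟩)⟩
    rw [← cmp_eq_lt_iff, ← cmp_eq_lt_iff] at this
    exact this.1.trans this.2.symm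
  · have : b < p2 ∧ a < p1 :=
      ⟨hr, ha' _ (Finset.mem_image.mpr ⟨(p1, p2), Finset.mem_filter.mpr ⟨hp, hr⟩, rfl⟩)⟩
    rw [← cmp_eq_gt_iff, ← cmp_eq_gt_iff] at this
    exact this.1.trans this.2.symm

/-- Cofinal set of partial isos defined at `a : α`. -/
noncomputable def definedAtLeft {c1 : α → S} {c2 : β → S} (h1 : ∀ x, c1 x ∈ Γ)
    (h2 : Good Γ c2) (a : α) : Order.Cofinal (CPI c1 c2) where
  carrier := {f | ∃ b : β, (a, b) ∈ f.val}
  isCofinal f := by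
    obtain ⟨b, hbc, a_b⟩ := exists_across h1 h2 f a
    refine ⟨⟨insert (a, b) f.val, fun p hp q hq => ?_, fun p hp => ?_⟩,
      ⟨b, Finset.mem_insert_self _ _⟩, Finset.subset_insert _ _⟩
    · rw [Finset.mem_insert] at hp hq
      rcases hp with (rfl | pf) <;> rcases hq with (rfl | qf)
      · simp only [cmp_self_eq_eq]
      · rw [cmp_eq_cmp_symm]
        exact a_b _ qf
      · exact a_b _ pf
      · exact f.prop.1 _ pf _ qf
    · rw [Finset.mem_insert] at hp
      rcases hp with (rfl | pf)
      · exact hbc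
      · exact f.prop.2 _ pf

/-- Cofinal set of partial isos defined at `b : β`. -/
noncomputable def definedAtRight {c1 : α → S} {c2 : β → S} (h2 : ∀ x, c2 x ∈ Γ)
    (h1 : Good Γ c1) (b : β) : Order.Cofinal (CPI c1 c2) where
  carrier := {f | ∃ a : α, (a, b) ∈ f.val}
  isCofinal f := by
    obtain ⟨a, hac, b_a⟩ := exists_across_right h2 h1 f b
    refine ⟨⟨insert (a, b) f.val, fun p hp q hq => ?_, fun p hp => ?_⟩,
      ⟨a, Finset.mem_insert_self _ _⟩, Finset.subset_insert _ _⟩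
    · rw [Finset.mem_insert] at hp hq
      rcases hp with (rfl | pf) <;> rcases hq with (rfl | qf)
      · simp only [cmp_self_eq_eq]
      · rw [cmp_eq_cmp_symm]
        exact (b_a _ qf).symm
      · exact (b_a _ pf).symm
      · exact f.prop.1 _ pf _ qf
    · rw [Finset.mem_insert] at hp
      rcases hp with (rfl | pf)
      · exact hac.symm
      · exact f.prop.2 _ pf

/-- The colored back-and-forth theorem. -/
theorem good_iso [Countable α] [Countable β] {c1 : α → S} {c2 : β → S}
    (h1 : Good Γ c1) (h2 : Good Γ c2) :
    ∃ e : α ≃o β, ∀ x, c2 (e x) = c1 x := by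
  cases nonempty_encodable (α ⊕ β)
  let to_cofinal : α ⊕ β → Order.Cofinal (CPI c1 c2) := fun p =>
    Sum.recOn p (definedAtLeft h1.2.1 h2) (definedAtRight h2.2.1 h1)
  let our_ideal : Order.Ideal (CPI c1 c2) := Order.idealOfCofinals default to_cofinal
  have hF : ∀ a : α, ∃ b : β, ∃ f ∈ our_ideal, (a, b) ∈ f.val := by
    intro a
    obtain ⟨f, ⟨b, hb⟩, hf⟩ := Order.cofinal_meets_idealOfCofinals default to_cofinal (Sum.inl a)
    exact ⟨b, f, hf, hb⟩
  have hG : ∀ b : β, ∃ a : α, ∃ f ∈ our_ideal, (a, b) ∈ f.val := by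
    intro b
    obtain ⟨f, ⟨a, ha⟩, hf⟩ := Order.cofinal_meets_idealOfCofinals default to_cofinal (Sum.inr b)
    exact ⟨a, f, hf, ha⟩
  choose F hF' using hF
  choose G hG' using hG
  have key : ∀ (a : α) (b : β), cmp a (G b) = cmp (F a) b := by
    intro a b
    obtain ⟨f, hf, ha⟩ := hF' a
    obtain ⟨g, hg, hb⟩ := hG' b
    obtain ⟨m, _, fm, gm⟩ := our_ideal.directed _ hf _ hg
    exact m.prop.1 (a, _) (fm ha) (_, b) (gm hb)
  refine ⟨OrderIso.ofCmpEqCmp F G key, fun a => ?_⟩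
  obtain ⟨f, _, ha⟩ := hF' a
  exact f.prop.2 _ ha

end ShuffleAux


/-- `c : ℚ → S` is the dense `Γ`-coloring of the rationals (the word `Γ^η`). -/
def GammaEta {S : Type*} (Γ : Finset S) (c : ℚ → S) : Prop :=
  (∀ x, c x ∈ Γ) ∧ ∀ q r : ℚ, q < r → ∀ a ∈ Γ, ∃ x : ℚ, q < x ∧ x < r ∧ c x = a

/-- Isomorphism of colored linear orders. -/
def ColoredIso {α β S : Type*} [LinearOrder α] [LinearOrder β]
    (cα : α → S) (cβ : β → S) : Prop :=
  ∃ e : α ≃o β, ∀ x, cβ (e x) = cα x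

/-- Domain of a component word: `k` optional left endpoints, then `e` copies of
`ℚ`, then `r` optional right endpoints. With `(k,e,r) = (1,0,0)` this is a
singleton word; with `e = 1` and `k, r ≤ 1` it models the four forms
`Γ^η`, `c Γ^η`, `Γ^η c`, `c Γ^η d`. -/
def Fib (k e r : ℕ) : Type := Fin k ⊕ₗ ((Fin e ×ₗ ℚ) ⊕ₗ Fin r)

instance (k e r : ℕ) : LinearOrder (Fib k e r) :=
  inferInstanceAs (LinearOrder (Fin k ⊕ₗ ((Fin e ×ₗ ℚ) ⊕ₗ Fin r)))

/-- Shuffle absorption: if `a₁,…,aₙ ∈ Γ` (the singleton components, indices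
`j < n`) and `u₁,…,uₘ` (`m ≥ 1`, indices `n ≤ j`) are words of one of the forms
`Γ^η`, `c Γ^η`, `Γ^η c`, `c Γ^η d` with `c,d ∈ Γ`, and every element of `Γ`
occurs in some component, then the shuffle `[a₁,…,aₙ,u₁,…,uₘ]^η` (a dense
`Fin (n+m)`-indexed sum over `ℚ`) is isomorphic to `Γ^η`. -/

instance (k e r : ℕ) : Countable (Fib k e r) :=
  inferInstanceAs (Countable (Fin k ⊕ (Fin e × ℚ ⊕ Fin r)))

theorem shuffle_of_uniform_components {S : Type*} (Γ : Finset S) (hΓ : Γ.Nonempty)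
    (n m : ℕ) (hm : 1 ≤ m)
    (k e r : Fin (n + m) → ℕ)
    (col : ∀ j : Fin (n + m), Fib (k j) (e j) (r j) → S)
    (a : Fin (n + m) → S)
    -- the first `n` components are singleton words colored by letters of `Γ`
    (hsing : ∀ j : Fin (n + m), (j : ℕ) < n →
      k j = 1 ∧ e j = 0 ∧ r j = 0 ∧ a j ∈ Γ ∧ ∀ x, col j x = a j)
    -- the last `m` components have one of the forms `Γ^η`, `cΓ^η`, `Γ^η c`, `cΓ^η d`
    (hunif : ∀ j : Fin (n + m), n ≤ (j : ℕ) →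
      e j = 1 ∧ k j ≤ 1 ∧ r j ≤ 1 ∧
      (∀ i : Fin (e j),
        GammaEta Γ (fun q => col j (toLex (Sum.inr (toLex (Sum.inl (toLex (i, q)))))))) ∧
      (∀ x : Fin (k j), col j (toLex (Sum.inl x)) ∈ Γ) ∧
      (∀ x : Fin (r j), col j (toLex (Sum.inr (toLex (Sum.inr x)))) ∈ Γ))
    -- every element of `Γ` occurs in some component
    (hcov : ∀ g ∈ Γ, ∃ j x, col j x = g)
    -- the shuffling function: each component index occurs densely
    (φ : ℚ → Fin (n + m))
    (hφ : ∀ q r' : ℚ, q < r' → ∀ j, ∃ x : ℚ, q < x ∧ x < r' ∧ φ x = j)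
    (c : ℚ → S) (hc : GammaEta Γ c) :
    ColoredIso
      (fun x : Σₗ q : ℚ, Fib (k (φ q)) (e (φ q)) (r (φ q)) =>
        col (φ (ofLex x).1) (ofLex x).2)
      c := by
  classical
  -- every fiber is nonempty
  have fibNe : ∀ j, Nonempty (Fib (k j) (e j) (r j)) := by
    intro j
    by_cases hj : (j : ℕ) < n
    · obtain ⟨hk, -, -, -, -⟩ := hsing j hj
      exact ⟨toLex (Sum.inl ⟨0, by omega⟩)⟩
    · obtain ⟨he, -, -, -, -, -⟩ := hunif j (le_of_not_gt hj)
      exact ⟨toLex (Sum.inr (toLex (Sum.inl (toLex (⟨0, by omega⟩, (0 : ℚ))))))⟩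
  -- all colors are in Γ
  have colMem : ∀ j x, col j x ∈ Γ := by
    intro j x
    by_cases hj : (j : ℕ) < n
    · obtain ⟨-, -, -, haj, hcol⟩ := hsing j hj
      rw [hcol]; exact haj
    · obtain ⟨-, -, -, hη, hl, hr'⟩ := hunif j (le_of_not_gt hj)
      rcases x with cu | (p | d)
      · exact hl cu
      · exact (hη (ofLex p).1).1 (ofLex p).2
      · exact hr' d
  -- each non-singleton fiber realizes each color
  have fibColor : ∀ j : Fin (n + m), n ≤ (j : ℕ) → ∀ g ∈ Γ, ∃ w, col j w = g := by
    intro j hj g hg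
    obtain ⟨he, -, -, hη, -, -⟩ := hunif j hj
    obtain ⟨t, -, -, h3⟩ := (hη ⟨0, by omega⟩).2 0 1 (by norm_num) g hg
    exact ⟨_, h3⟩
  -- each fiber is "internally dense" in every color
  have fibDense : ∀ j (u v : Fib (k j) (e j) (r j)), u < v → ∀ g ∈ Γ,
      ∃ w, u < w ∧ w < v ∧ col j w = g := by
    intro j u v huv g hg
    by_cases hj : (j : ℕ) < n
    · exfalso
      obtain ⟨hk, he, hr', -, -⟩ := hsing j hj
      rcases u with cu | (p | d)
      · rcases v with cv | (p2 | d2)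
        · have h2 := Sum.Lex.inl_lt_inl_iff.1 huv
          have := cu.isLt; have := cv.isLt
          rw [Fin.lt_def] at h2
          omega
        · have := (ofLex p2).1.isLt; omega
        · have := d2.isLt; omega
      · have := (ofLex p).1.isLt; omega
      · have := d.isLt; omega
    · obtain ⟨he, hk, hr', hη, -, -⟩ := hunif j (le_of_not_gt hj)
      rcases u with cu | (p | d)
      · rcases v with cv | (p2 | d2)
        · exfalso
          have h2 := Sum.Lex.inl_lt_inl_iff.1 huv
          have := cu.isLt; have := cv.isLt
          rw [Fin.lt_def] at h2
          omega
        · -- u left endpoint, v interior at p2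
          obtain ⟨t', h1, h2, h3⟩ :=
            (hη (ofLex p2).1).2 ((ofLex p2).2 - 1) (ofLex p2).2 (by linarith) g hg
          refine ⟨toLex (Sum.inr (toLex (Sum.inl (toLex ((ofLex p2).1, t'))))),
            Sum.Lex.inl_lt_inr _ _, ?_, h3⟩
          exact Sum.Lex.inr_lt_inr_iff.2 (Sum.Lex.inl_lt_inl_iff.2
            ((Prod.Lex.lt_iff (y := p2)).2 (Or.inr ⟨rfl, h2⟩)))
        · -- u left endpoint, v right endpoint
          obtain ⟨t', -, -, h3⟩ := (hη ⟨0, by omega⟩).2 0 1 (by norm_num) g hg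
          exact ⟨toLex (Sum.inr (toLex (Sum.inl (toLex (⟨0, by omega⟩, t'))))),
            Sum.Lex.inl_lt_inr _ _,
            Sum.Lex.inr_lt_inr_iff.2 (Sum.Lex.inl_lt_inr _ _), h3⟩
      · rcases v with cv | (p2 | d2)
        · exact absurd huv Sum.Lex.not_inr_lt_inl
        · -- both interior
          have h2 := Sum.Lex.inl_lt_inl_iff.1 (Sum.Lex.inr_lt_inr_iff.1 huv)
          have h3 := (Prod.Lex.lt_iff (x := p) (y := p2)).1 h2
          have hii : (ofLex p).1 = (ofLex p2).1 := by
            rcases h3 with h | ⟨h, -⟩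
            · exfalso
              have := (ofLex p).1.isLt; have := (ofLex p2).1.isLt
              rw [Fin.lt_def] at h; omega
            · exact h
          have htt : (ofLex p).2 < (ofLex p2).2 := by
            rcases h3 with h | ⟨-, h⟩
            · exfalso
              have := (ofLex p).1.isLt; have := (ofLex p2).1.isLt
              rw [Fin.lt_def] at h; omega
            · exact h
          obtain ⟨t', h1, h2', h3'⟩ := (hη (ofLex p).1).2 _ _ htt g hg
          refine ⟨toLex (Sum.inr (toLex (Sum.inl (toLex ((ofLex p).1, t'))))),
            ?_, ?_, h3'⟩
          · exact Sum.Lex.inr_lt_inr_iff.2 (Sum.Lex.inl_lt_inl_iff.2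
              ((Prod.Lex.lt_iff (x := p)).2 (Or.inr ⟨rfl, h1⟩)))
          · exact Sum.Lex.inr_lt_inr_iff.2 (Sum.Lex.inl_lt_inl_iff.2
              ((Prod.Lex.lt_iff (y := p2)).2 (Or.inr ⟨hii, h2'⟩)))
        · -- u interior, v right endpoint
          obtain ⟨t', h1, -, h3⟩ :=
            (hη (ofLex p).1).2 ((ofLex p).2) ((ofLex p).2 + 1) (by linarith) g hg
          refine ⟨toLex (Sum.inr (toLex (Sum.inl (toLex ((ofLex p).1, t'))))),
            ?_, Sum.Lex.inr_lt_inr_iff.2 (Sum.Lex.inl_lt_inr _ _), h3⟩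
          exact Sum.Lex.inr_lt_inr_iff.2 (Sum.Lex.inl_lt_inl_iff.2
            ((Prod.Lex.lt_iff (x := p)).2 (Or.inr ⟨rfl, h1⟩)))
      · exfalso
        rcases v with cv | (p2 | d2)
        · exact Sum.Lex.not_inr_lt_inl huv
        · exact Sum.Lex.not_inr_lt_inl (Sum.Lex.inr_lt_inr_iff.1 huv)
        · have h2 := Sum.Lex.inr_lt_inr_iff.1 (Sum.Lex.inr_lt_inr_iff.1 huv)
          have := d.isLt; have := d2.isLt
          rw [Fin.lt_def] at h2
          omega
  -- a distinguished non-singleton index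
  have hnm : n < n + m := by omega
  set jd : Fin (n + m) := ⟨n, hnm⟩ with hjd
  haveI : Countable (Σₗ q : ℚ, Fib (k (φ q)) (e (φ q)) (r (φ q))) :=
    inferInstanceAs (Countable (Σ q : ℚ, Fib (k (φ q)) (e (φ q)) (r (φ q))))
  have hX : ShuffleAux.Good Γ
      (fun x : Σₗ q : ℚ, Fib (k (φ q)) (e (φ q)) (r (φ q)) =>
        col (φ (ofLex x).1) (ofLex x).2) := by
    refine ⟨⟨toLex ⟨0, (fibNe (φ 0)).some⟩⟩, fun x => colMem _ _, ?_, ?_, ?_⟩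
    · intro x
      refine ⟨toLex ⟨(ofLex x).1 + 1, (fibNe _).some⟩, ?_⟩
      exact Sigma.Lex.lt_def.2 (Or.inl (lt_add_one _))
    · intro x
      refine ⟨toLex ⟨(ofLex x).1 - 1, (fibNe _).some⟩, ?_⟩
      exact Sigma.Lex.lt_def.2 (Or.inl (sub_one_lt _))
    · rintro ⟨qx, u⟩ ⟨qy, v⟩ hxy g hg
      rcases Sigma.Lex.lt_def.1 hxy with hq | ⟨hq, hlt⟩
      · obtain ⟨q, hq1, hq2, hqj⟩ := hφ qx qy hq jd
        have hn' : n ≤ ((φ q : Fin (n + m)) : ℕ) := by rw [hqj]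
        obtain ⟨w, hw⟩ := fibColor (φ q) hn' g hg
        exact ⟨toLex ⟨q, w⟩, Sigma.Lex.lt_def.2 (Or.inl hq1),
          Sigma.Lex.lt_def.2 (Or.inl hq2), hw⟩
      · dsimp at hq
        subst hq
        have hlt' : u < v := hlt
        obtain ⟨w, hw1, hw2, hw3⟩ := fibDense (φ qx) u v hlt' g hg
        exact ⟨toLex ⟨qx, w⟩, Sigma.Lex.lt_def.2 (Or.inr ⟨rfl, hw1⟩),
          Sigma.Lex.lt_def.2 (Or.inr ⟨rfl, hw2⟩), hw3⟩
  have hQ : ShuffleAux.Good Γ c :=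
    ⟨⟨0⟩, hc.1, fun x => ⟨x + 1, lt_add_one x⟩, fun x => ⟨x - 1, by linarith⟩, hc.2⟩
  exact ShuffleAux.good_iso hX hQ
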